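/- Let K be the field of fractions of ℚ[x₀,x₁,x₂,x₃,x₄,x₅], set A = (x₂x₄+x₃x₅)/(x₀x₁), B = (x₁x₄+x₀x₅)/(x₂x₃), C = (x₀x₂+x₁x₃)/(x₄x₅), and let τ'₁, τ'₂, τ'₃ be the maps on K⁶ defined by: τ'₁ replaces (v₀,v₁) by ((v₂v₄+v₃v₅)/v₁, (v₂v₄+v₃v₅)/v₀); τ'₂ replaces (v₂,v₃) by ((v₁v₄+v₀v₅)/v₃, (v₁v₄+v₀v₅)/v₂); τ'₃ replaces (v₄,v₅) by ((v₀v₂+v₁v₃)/v₅, (v₀v₂+v₁v₃)/v₄); each fixes the remaining entries. For natural numbers s, t, let w be the word consisting of the block (1,2,3) repeated 2t times, then the letters (1,2), then the block (1,3,2) repeated 2s+1 times, and let v be the result of applying the maps to X = (x₀,…,x₅) in left-to-right order along w. Then v₀ = x₀·A^{3s²+3st+3t²+3s+3t+1}·B^{3s²+3st+3t²+4s+2t+1}·C^{3s²+3st+3t²+2s+t} and v₁ = x₁ times the same monomial in A, B, C. -/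

import Mathlib

noncomputable section

/-- The polynomial ring ℚ[x₀,…,x₅]. -/
abbrev P : Type := MvPolynomial (Fin 6) ℚ

/-- K = Frac(ℚ[x₀,…,x₅]). -/
abbrev K : Type := FractionRing P

/-- The images of the variables x₀,…,x₅ in K. -/
def x (i : Fin 6) : K := algebraMap P K (MvPolynomial.X i)

/-- τ'₁ : replaces (v₀, v₁) by ((v₂v₄+v₃v₅)/v₁, (v₂v₄+v₃v₅)/v₀). -/
def tau1 (v : Fin 6 → K) : Fin 6 → K := fun k =>
  if k = 0 then (v 2 * v 4 + v 3 * v 5) / v 1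
  else if k = 1 then (v 2 * v 4 + v 3 * v 5) / v 0
  else v k

/-- τ'₂ : replaces (v₂, v₃) by ((v₁v₄+v₀v₅)/v₃, (v₁v₄+v₀v₅)/v₂). -/
def tau2 (v : Fin 6 → K) : Fin 6 → K := fun k =>
  if k = 2 then (v 1 * v 4 + v 0 * v 5) / v 3
  else if k = 3 then (v 1 * v 4 + v 0 * v 5) / v 2
  else v k

/-- τ'₃ : replaces (v₄, v₅) by ((v₀v₂+v₁v₃)/v₅, (v₀v₂+v₁v₃)/v₄). -/
def tau3 (v : Fin 6 → K) : Fin 6 → K := fun k =>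
  if k = 4 then (v 0 * v 2 + v 1 * v 3) / v 5
  else if k = 5 then (v 0 * v 2 + v 1 * v 3) / v 4
  else v k

/-- τ' indexed by Fin 3: `tau i` is τ'_{i+1}. -/
def tau : Fin 3 → (Fin 6 → K) → (Fin 6 → K)
  | 0 => tau1
  | 1 => tau2
  | 2 => tau3

/-- The initial labeled seed X = (x₀,…,x₅). -/
def X0 : Fin 6 → K := x

/-- Apply the maps τ'₍a₁₎, …, τ'₍aₙ₎ along the word `w` in left-to-right order. -/
def applyWord (w : List (Fin 3)) (v : Fin 6 → K) : Fin 6 → K :=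
  w.foldl (fun u a => tau a u) v

/-- A = (x₂x₄+x₃x₅)/(x₀x₁). -/
def A : K := (x 2 * x 4 + x 3 * x 5) / (x 0 * x 1)

/-- B = (x₁x₄+x₀x₅)/(x₂x₃). -/
def B : K := (x 1 * x 4 + x 0 * x 5) / (x 2 * x 3)

/-- C = (x₀x₂+x₁x₃)/(x₄x₅). -/
def C : K := (x 0 * x 2 + x 1 * x 3) / (x 4 * x 5)

/-- The canonical path (123)^{2t} (12) (132)^{2s+1} to the odd alcove with
i = 6s+3, j = 3t+1 (letters 1,2,3 are encoded as 0,1,2 in `Fin 3`). -/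
def word11 (s t : ℕ) : List (Fin 3) :=
  (List.replicate (2 * t) ([0, 1, 2] : List (Fin 3))).flatten ++
    ([0, 1] : List (Fin 3)) ++
    (List.replicate (2 * s + 1) ([0, 2, 1] : List (Fin 3))).flatten

lemma x_ne (k : Fin 6) : x k ≠ 0 := by
  simp only [x, ne_eq, map_eq_zero_iff _ (IsFractionRing.injective P K)]
  exact MvPolynomial.X_ne_zero k

lemma sum_ne (i j k l : Fin 6) : x i * x j + x k * x l ≠ 0 := by
  have h : x i * x j + x k * x l =
      algebraMap P K (MvPolynomial.X i * MvPolynomial.X j + MvPolynomial.X k * MvPolynomial.X l) := by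
    simp [x]
  rw [h, ne_eq, map_eq_zero_iff _ (IsFractionRing.injective P K)]
  intro hz
  have := congrArg (MvPolynomial.eval (fun _ => (1:ℚ))) hz
  simp at this

lemma hA : A ≠ 0 := div_ne_zero (sum_ne 2 4 3 5) (mul_ne_zero (x_ne 0) (x_ne 1))
lemma hB : B ≠ 0 := div_ne_zero (sum_ne 1 4 0 5) (mul_ne_zero (x_ne 2) (x_ne 3))
lemma hC : C ≠ 0 := div_ne_zero (sum_ne 0 2 1 3) (mul_ne_zero (x_ne 4) (x_ne 5))

lemma key1 : x 2 * x 4 + x 3 * x 5 = A * (x 0 * x 1) :=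
  (div_mul_cancel₀ _ (mul_ne_zero (x_ne 0) (x_ne 1))).symm
lemma key2 : x 1 * x 4 + x 0 * x 5 = B * (x 2 * x 3) :=
  (div_mul_cancel₀ _ (mul_ne_zero (x_ne 2) (x_ne 3))).symm
lemma key3 : x 0 * x 2 + x 1 * x 3 = C * (x 4 * x 5) :=
  (div_mul_cancel₀ _ (mul_ne_zero (x_ne 4) (x_ne 5))).symm

def mono (a b c : ℤ) : K := A ^ a * B ^ b * C ^ c

lemma mono_ne (a b c : ℤ) : mono a b c ≠ 0 :=
  mul_ne_zero (mul_ne_zero (zpow_ne_zero _ hA) (zpow_ne_zero _ hB)) (zpow_ne_zero _ hC)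

lemma mono_mul (a b c d e f : ℤ) : mono a b c * mono d e f = mono (a+d) (b+e) (c+f) := by
  simp only [mono, zpow_add₀ hA, zpow_add₀ hB, zpow_add₀ hC]; ring

lemma mono_congr {a b c d e f : ℤ} (h1 : a = d) (h2 : b = e) (h3 : c = f) :
    mono a b c = mono d e f := by rw [h1, h2, h3]

lemma mono_A : mono 1 0 0 = A := by simp [mono]
lemma mono_B : mono 0 1 0 = B := by simp [mono]
lemma mono_C : mono 0 0 1 = C := by simp [mono]
lemma mono_zero : mono 0 0 0 = 1 := by simp [mono]

def V (a1 b1 c1 a2 b2 c2 a3 b3 c3 : ℤ) : Fin 6 → K := fun k =>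
  if k = 0 then x 0 * mono a1 b1 c1
  else if k = 1 then x 1 * mono a1 b1 c1
  else if k = 2 then x 2 * mono a2 b2 c2
  else if k = 3 then x 3 * mono a2 b2 c2
  else if k = 4 then x 4 * mono a3 b3 c3
  else x 5 * mono a3 b3 c3

section Vvals
variable (a1 b1 c1 a2 b2 c2 a3 b3 c3 : ℤ)

lemma V_0 : V a1 b1 c1 a2 b2 c2 a3 b3 c3 0 = x 0 * mono a1 b1 c1 := rfl
lemma V_1 : V a1 b1 c1 a2 b2 c2 a3 b3 c3 1 = x 1 * mono a1 b1 c1 := rfl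
lemma V_2 : V a1 b1 c1 a2 b2 c2 a3 b3 c3 2 = x 2 * mono a2 b2 c2 := rfl
lemma V_3 : V a1 b1 c1 a2 b2 c2 a3 b3 c3 3 = x 3 * mono a2 b2 c2 := rfl
lemma V_4 : V a1 b1 c1 a2 b2 c2 a3 b3 c3 4 = x 4 * mono a3 b3 c3 := rfl
lemma V_5 : V a1 b1 c1 a2 b2 c2 a3 b3 c3 5 = x 5 * mono a3 b3 c3 := rfl

lemma shift1 :
    mono (1+a2+a3-a1) (b2+b3-b1) (c2+c3-c1) * mono a1 b1 c1 =
      A * (mono a2 b2 c2 * mono a3 b3 c3) := by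
  rw [mono_mul, mono_mul, ← mono_A, mono_mul]
  exact mono_congr (by ring) (by ring) (by ring)

lemma shift2 :
    mono (a1+a3-a2) (1+b1+b3-b2) (c1+c3-c2) * mono a2 b2 c2 =
      B * (mono a1 b1 c1 * mono a3 b3 c3) := by
  rw [mono_mul, mono_mul, ← mono_B, mono_mul]
  exact mono_congr (by ring) (by ring) (by ring)

lemma shift3 :
    mono (a1+a2-a3) (b1+b2-b3) (1+c1+c2-c3) * mono a3 b3 c3 =
      C * (mono a1 b1 c1 * mono a2 b2 c2) := by
  rw [mono_mul, mono_mul, ← mono_C, mono_mul]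
  exact mono_congr (by ring) (by ring) (by ring)

lemma T1 :
    tau1 (V a1 b1 c1 a2 b2 c2 a3 b3 c3) =
      V (1+a2+a3-a1) (b2+b3-b1) (c2+c3-c1) a2 b2 c2 a3 b3 c3 := by
  funext k
  by_cases h0 : k = 0
  · subst h0
    simp only [tau1, if_pos rfl, V_0, V_1, V_2, V_3, V_4, V_5, if_true, eq_self_iff_true]
    rw [div_eq_iff (mul_ne_zero (x_ne 1) (mono_ne a1 b1 c1))]
    linear_combination (mono a2 b2 c2 * mono a3 b3 c3) * key1 -
      (x 0 * x 1) * shift1 a1 b1 c1 a2 b2 c2 a3 b3 c3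
  · by_cases h1 : k = 1
    · subst h1
      simp only [tau1, if_neg (by decide : (1:Fin 6) ≠ 0), if_pos rfl,
        V_0, V_1, V_2, V_3, V_4, V_5, if_true, eq_self_iff_true]
      rw [div_eq_iff (mul_ne_zero (x_ne 0) (mono_ne a1 b1 c1))]
      linear_combination (mono a2 b2 c2 * mono a3 b3 c3) * key1 -
        (x 0 * x 1) * shift1 a1 b1 c1 a2 b2 c2 a3 b3 c3
    · fin_cases k <;> simp_all [tau1, V]

lemma T2 :
    tau2 (V a1 b1 c1 a2 b2 c2 a3 b3 c3) =
      V a1 b1 c1 (a1+a3-a2) (1+b1+b3-b2) (c1+c3-c2) a3 b3 c3 := by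
  funext k
  by_cases h2 : k = 2
  · subst h2
    simp only [tau2, if_pos rfl, V_0, V_1, V_2, V_3, V_4, V_5, if_true, eq_self_iff_true]
    rw [div_eq_iff (mul_ne_zero (x_ne 3) (mono_ne a2 b2 c2))]
    linear_combination (mono a1 b1 c1 * mono a3 b3 c3) * key2 -
      (x 2 * x 3) * shift2 a1 b1 c1 a2 b2 c2 a3 b3 c3
  · by_cases h3 : k = 3
    · subst h3
      simp only [tau2, if_neg (by decide : (3:Fin 6) ≠ 2), if_pos rfl,
        V_0, V_1, V_2, V_3, V_4, V_5, if_true, eq_self_iff_true]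
      rw [div_eq_iff (mul_ne_zero (x_ne 2) (mono_ne a2 b2 c2))]
      linear_combination (mono a1 b1 c1 * mono a3 b3 c3) * key2 -
        (x 2 * x 3) * shift2 a1 b1 c1 a2 b2 c2 a3 b3 c3
    · fin_cases k <;> simp_all [tau2, V]

lemma T3 :
    tau3 (V a1 b1 c1 a2 b2 c2 a3 b3 c3) =
      V a1 b1 c1 a2 b2 c2 (a1+a2-a3) (b1+b2-b3) (1+c1+c2-c3) := by
  funext k
  by_cases h4 : k = 4
  · subst h4
    simp only [tau3, if_pos rfl, V_0, V_1, V_2, V_3, V_4, V_5, if_true, eq_self_iff_true]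
    rw [div_eq_iff (mul_ne_zero (x_ne 5) (mono_ne a3 b3 c3))]
    linear_combination (mono a1 b1 c1 * mono a2 b2 c2) * key3 -
      (x 4 * x 5) * shift3 a1 b1 c1 a2 b2 c2 a3 b3 c3
  · by_cases h5 : k = 5
    · subst h5
      simp only [tau3, if_neg (by decide : (5:Fin 6) ≠ 4), if_pos rfl,
        V_0, V_1, V_2, V_3, V_4, V_5, if_true, eq_self_iff_true]
      rw [div_eq_iff (mul_ne_zero (x_ne 4) (mono_ne a3 b3 c3))]
      linear_combination (mono a1 b1 c1 * mono a2 b2 c2) * key3 -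
        (x 4 * x 5) * shift3 a1 b1 c1 a2 b2 c2 a3 b3 c3
    · fin_cases k <;> simp_all [tau3, V]

end Vvals

lemma V_congr {a1 b1 c1 a2 b2 c2 a3 b3 c3 a1' b1' c1' a2' b2' c2' a3' b3' c3' : ℤ}
    (h1 : a1 = a1') (h2 : b1 = b1') (h3 : c1 = c1')
    (h4 : a2 = a2') (h5 : b2 = b2') (h6 : c2 = c2')
    (h7 : a3 = a3') (h8 : b3 = b3') (h9 : c3 = c3') :
    V a1 b1 c1 a2 b2 c2 a3 b3 c3 = V a1' b1' c1' a2' b2' c2' a3' b3' c3' := by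
  rw [h1, h2, h3, h4, h5, h6, h7, h8, h9]

lemma X0_eq : X0 = V 0 0 0 0 0 0 0 0 0 := by
  funext k
  fin_cases k <;> simp [X0, V, mono, x]

lemma applyWord_nil (v : Fin 6 → K) : applyWord [] v = v := rfl

lemma applyWord_cons (a : Fin 3) (w : List (Fin 3)) (v : Fin 6 → K) :
    applyWord (a :: w) v = applyWord w (tau a v) := rfl

lemma applyWord_append (w1 w2 : List (Fin 3)) (v : Fin 6 → K) :
    applyWord (w1 ++ w2) v = applyWord w2 (applyWord w1 v) :=
  List.foldl_append

lemma tau_zero : tau 0 = tau1 := rfl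
lemma tau_one : tau 1 = tau2 := rfl
lemma tau_two : tau 2 = tau3 := rfl

lemma prefix_eq (t : ℕ) :
    applyWord ((List.replicate (2 * t) ([0, 1, 2] : List (Fin 3))).flatten) X0 =
      V (3*(t:ℤ)^2) (-t+3*t^2) (-2*t+3*t^2)
        (t+3*(t:ℤ)^2) (3*t^2) (-t+3*t^2)
        (2*t+3*(t:ℤ)^2) (t+3*t^2) (3*t^2) := by
  induction t with
  | zero =>
    rw [show (2 : ℕ) * 0 = 0 from rfl, List.replicate_zero, List.flatten_nil, applyWord_nil,
      X0_eq]
    exact V_congr (by norm_num) (by norm_num) (by norm_num) (by norm_num) (by norm_num)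
      (by norm_num) (by norm_num) (by norm_num) (by norm_num)
  | succ t ih =>
    have hw : (List.replicate (2 * (t+1)) ([0, 1, 2] : List (Fin 3))).flatten =
        (List.replicate (2 * t) ([0, 1, 2] : List (Fin 3))).flatten ++
          ([0, 1, 2, 0, 1, 2] : List (Fin 3)) := by
      rw [show 2 * (t+1) = 2 * t + 2 from by ring, List.replicate_add, List.flatten_append]
      rfl
    rw [hw, applyWord_append, ih]
    simp only [applyWord_cons, applyWord_nil, tau_zero, tau_one, tau_two]
    rw [T1, T2, T3, T1, T2, T3]
    exact V_congr (by push_cast; ring) (by push_cast; ring) (by push_cast; ring)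
      (by push_cast; ring) (by push_cast; ring) (by push_cast; ring)
      (by push_cast; ring) (by push_cast; ring) (by push_cast; ring)

lemma full_eq (s t : ℕ) :
    applyWord (word11 s t) X0 =
      V (1+3*s+3*t+(3*(s:ℤ)^2+3*s*t+3*t^2)) (1+4*s+2*t+(3*(s:ℤ)^2+3*s*t+3*t^2))
        (2*s+t+(3*(s:ℤ)^2+3*s*t+3*t^2))
        (2+5*s+4*t+(3*(s:ℤ)^2+3*s*t+3*t^2)) (3+6*s+3*t+(3*(s:ℤ)^2+3*s*t+3*t^2))
        (1+4*s+2*t+(3*(s:ℤ)^2+3*s*t+3*t^2))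
        (2+4*s+5*t+(3*(s:ℤ)^2+3*s*t+3*t^2)) (2+5*s+4*t+(3*(s:ℤ)^2+3*s*t+3*t^2))
        (1+3*s+3*t+(3*(s:ℤ)^2+3*s*t+3*t^2)) := by
  induction s with
  | zero =>
    rw [word11, applyWord_append, applyWord_append, prefix_eq]
    have h1 : (List.replicate (2 * 0 + 1) ([0, 2, 1] : List (Fin 3))).flatten =
        ([0, 2, 1] : List (Fin 3)) := rfl
    rw [h1]
    simp only [applyWord_cons, applyWord_nil, tau_zero, tau_one, tau_two]
    rw [T1, T2, T1, T3, T2]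
    exact V_congr (by push_cast; ring) (by push_cast; ring) (by push_cast; ring)
      (by push_cast; ring) (by push_cast; ring) (by push_cast; ring)
      (by push_cast; ring) (by push_cast; ring) (by push_cast; ring)
  | succ s ih =>
    have hw : word11 (s+1) t = word11 s t ++ ([0, 2, 1, 0, 2, 1] : List (Fin 3)) := by
      rw [word11, word11, show 2 * (s+1) + 1 = (2 * s + 1) + 2 from by ring,
        List.replicate_add, List.flatten_append, ← List.append_assoc]
      rfl
    rw [hw, applyWord_append, ih]
    simp only [applyWord_cons, applyWord_nil, tau_zero, tau_one, tau_two]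
    rw [T1, T3, T2, T1, T3, T2]
    exact V_congr (by push_cast; ring) (by push_cast; ring) (by push_cast; ring)
      (by push_cast; ring) (by push_cast; ring) (by push_cast; ring)
      (by push_cast; ring) (by push_cast; ring) (by push_cast; ring)
/-- Theorem 2.1, odd-alcove case |i| ≡ 3 mod 6, |j| ≡ 1 mod 3, i = 6s+3, j = 3t+1:
the vertex-0 and vertex-1 cluster variables at the corresponding odd alcove. -/
theorem alcove_odd_31 (s t : ℕ) :
    applyWord (word11 s t) X0 0 =
      x 0 * A ^ (3 * (s : ℤ) ^ 2 + 3 * s * t + 3 * t ^ 2 + 3 * s + 3 * t + 1)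
          * B ^ (3 * (s : ℤ) ^ 2 + 3 * s * t + 3 * t ^ 2 + 4 * s + 2 * t + 1)
          * C ^ (3 * (s : ℤ) ^ 2 + 3 * s * t + 3 * t ^ 2 + 2 * s + t) ∧
    applyWord (word11 s t) X0 1 =
      x 1 * A ^ (3 * (s : ℤ) ^ 2 + 3 * s * t + 3 * t ^ 2 + 3 * s + 3 * t + 1)
          * B ^ (3 * (s : ℤ) ^ 2 + 3 * s * t + 3 * t ^ 2 + 4 * s + 2 * t + 1)
          * C ^ (3 * (s : ℤ) ^ 2 + 3 * s * t + 3 * t ^ 2 + 2 * s + t) := by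
  constructor
  · have h := congrFun (full_eq s t) 0
    rw [V_0] at h
    rw [h, mono,
      show (1+3*(s:ℤ)+3*t+(3*(s:ℤ)^2+3*s*t+3*t^2)) =
        3*(s:ℤ)^2+3*s*t+3*t^2+3*s+3*t+1 from by ring,
      show (1+4*(s:ℤ)+2*t+(3*(s:ℤ)^2+3*s*t+3*t^2)) =
        3*(s:ℤ)^2+3*s*t+3*t^2+4*s+2*t+1 from by ring,
      show (2*(s:ℤ)+t+(3*(s:ℤ)^2+3*s*t+3*t^2)) =
        3*(s:ℤ)^2+3*s*t+3*t^2+2*s+t from by ring]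
    ring
  · have h := congrFun (full_eq s t) 1
    rw [V_1] at h
    rw [h, mono,
      show (1+3*(s:ℤ)+3*t+(3*(s:ℤ)^2+3*s*t+3*t^2)) =
        3*(s:ℤ)^2+3*s*t+3*t^2+3*s+3*t+1 from by ring,
      show (1+4*(s:ℤ)+2*t+(3*(s:ℤ)^2+3*s*t+3*t^2)) =
        3*(s:ℤ)^2+3*s*t+3*t^2+4*s+2*t+1 from by ring,
      show (2*(s:ℤ)+t+(3*(s:ℤ)^2+3*s*t+3*t^2)) =
        3*(s:ℤ)^2+3*s*t+3*t^2+2*s+t from by ring]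
    ring
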